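/- For every element n of the normalizer of the diagonal subgroup Δ in SL(2,ℂ) × SL(2,ℂ), there exists g ∈ Δ such that g·n lies in the maximal torus T, i.e. g·n is a pair of diagonal matrices. -/

import Mathlib

open Matrix

abbrev SL2 := Matrix.SpecialLinearGroup (Fin 2) ℂ

/-- The diagonal subgroup `Δ = {(A,A) : A ∈ SL(2,ℂ)}` of `SL(2,ℂ) × SL(2,ℂ)`. -/
def Delta : Subgroup (SL2 × SL2) where
  carrier := {p | p.2 = p.1}
  one_mem' := rfl
  mul_mem' := by
    intro a b ha hb
    simp only [Set.mem_setOf_eq] at *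
    rw [Prod.snd_mul, Prod.fst_mul, ha, hb]
  inv_mem' := by
    intro a ha
    simp only [Set.mem_setOf_eq] at *
    rw [Prod.snd_inv, Prod.fst_inv, ha]

/-- The maximal torus `T = {(diag(t,t⁻¹), diag(s,s⁻¹)) : t,s ∈ ℂˣ}` of
`SL(2,ℂ) × SL(2,ℂ)`, i.e. the subgroup of pairs of diagonal matrices. -/
def Tsub : Subgroup (SL2 × SL2) where
  carrier := {p | (p.1 : Matrix (Fin 2) (Fin 2) ℂ) 0 1 = 0 ∧
      (p.1 : Matrix (Fin 2) (Fin 2) ℂ) 1 0 = 0 ∧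
      (p.2 : Matrix (Fin 2) (Fin 2) ℂ) 0 1 = 0 ∧
      (p.2 : Matrix (Fin 2) (Fin 2) ℂ) 1 0 = 0}
  one_mem' := by
    simp [Set.mem_setOf_eq, Matrix.SpecialLinearGroup.coe_one, Matrix.one_apply]
  mul_mem' := by
    intro a b ha hb
    obtain ⟨h1, h2, h3, h4⟩ := ha
    obtain ⟨g1, g2, g3, g4⟩ := hb
    refine ⟨?_, ?_, ?_, ?_⟩ <;>
      simp [Prod.fst_mul, Prod.snd_mul, Matrix.SpecialLinearGroup.coe_mul, Matrix.mul_apply,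
        Fin.sum_univ_two, h1, h2, h3, h4, g1, g2, g3, g4]
  inv_mem' := by
    intro a ha
    obtain ⟨h1, h2, h3, h4⟩ := ha
    refine ⟨?_, ?_, ?_, ?_⟩ <;>
      simp [Prod.fst_inv, Prod.snd_inv, Matrix.SpecialLinearGroup.coe_inv,
        Matrix.adjugate_fin_two, h1, h2, h3, h4]

/-- **Claim (Proposition 4.6 in the paper).** For every element `n` of the normalizer of
the diagonal subgroup `Δ` in `SL(2,ℂ) × SL(2,ℂ)` there exists `g ∈ Δ` such that `g·n`
lies in the maximal torus `T` of pairs of diagonal matrices. -/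
theorem exists_diag_translate_of_mem_normalizer_delta
    (n : SL2 × SL2) (hn : n ∈ Subgroup.normalizer (Delta : Set (SL2 × SL2))) :
    ∃ g ∈ Delta, g * n ∈ Tsub := by
  rw [Subgroup.mem_normalizer_iff] at hn
  have comm : ∀ A : SL2, (n.1⁻¹ * n.2) * A = A * (n.1⁻¹ * n.2) := by
    intro A
    have h : (n * (A, A) * n⁻¹).2 = (n * (A, A) * n⁻¹).1 := (hn (A, A)).1 rfl
    simp only [Prod.fst_mul, Prod.snd_mul, Prod.fst_inv, Prod.snd_inv] at h
    have h2 := congrArg (fun x => n.1⁻¹ * x * n.2) h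
    simp only [mul_assoc, inv_mul_cancel, mul_one, inv_mul_cancel_left] at h2
    rw [mul_assoc]
    exact h2
  set C : Matrix (Fin 2) (Fin 2) ℂ := ((n.1⁻¹ * n.2 : SL2) : Matrix (Fin 2) (Fin 2) ℂ)
    with hC
  have hent : ∀ A : SL2, ∀ i j : Fin 2,
      (C * (A : Matrix (Fin 2) (Fin 2) ℂ)) i j = ((A : Matrix (Fin 2) (Fin 2) ℂ) * C) i j := by
    intro A i j
    have := congrArg (fun M : SL2 => (M : Matrix (Fin 2) (Fin 2) ℂ) i j) (comm A)
    simpa [hC] using this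
  have hE : ((!![1, 1; 0, 1] : Matrix (Fin 2) (Fin 2) ℂ)).det = 1 := by
    simp [Matrix.det_fin_two_of]
  have hF : ((!![1, 0; 1, 1] : Matrix (Fin 2) (Fin 2) ℂ)).det = 1 := by
    simp [Matrix.det_fin_two_of]
  have h10 : C 1 0 = 0 := by
    have := hent ⟨!![1, 1; 0, 1], hE⟩ 0 0
    simp [Matrix.mul_apply, Fin.sum_univ_two] at this
    linear_combination this
  have h01 : C 0 1 = 0 := by
    have := hent ⟨!![1, 0; 1, 1], hF⟩ 0 0
    simp [Matrix.mul_apply, Fin.sum_univ_two] at this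
    exact this
  refine ⟨(n.1⁻¹, n.1⁻¹), rfl, ?_⟩
  have hfst : ((n.1⁻¹, n.1⁻¹) * n).1 = 1 := by simp
  have hsnd : ((n.1⁻¹, n.1⁻¹) * n).2 = n.1⁻¹ * n.2 := rfl
  refine ⟨?_, ?_, ?_, ?_⟩
  · rw [hfst]; simp [Matrix.one_apply]
  · rw [hfst]; simp [Matrix.one_apply]
  · rw [hsnd]; exact h01
  · rw [hsnd]; exact h10
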